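/- Every unit square graph admits a conflict-free 4-coloring. That is, if V is a finite set and p : V → ℝ², then the simple graph on V in which distinct u, v are adjacent if and only if the Chebyshev (ℓ∞) distance between p(u) and p(v) is at most 2 admits a conflict-free 4-coloring. -/

import Mathlib

/-- A conflict-free coloring of `G` with `k` colors: a partial coloring
(uncolored vertices get `none`) such that every vertex has, in its closed
neighborhood, a colored vertex whose color occurs exactly once there. -/
def IsCFColoring {V : Type*} (G : SimpleGraph V) {k : ℕ} (χ : V → Option (Fin k)) : Prop :=
  ∀ v : V, ∃ u ∈ insert v (G.neighborSet v), (χ u).isSome ∧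
    ∀ w ∈ insert v (G.neighborSet v), χ w = χ u → w = u

/-- `G` admits a conflict-free coloring with `k` colors. -/
def HasCFColoring {V : Type*} (G : SimpleGraph V) (k : ℕ) : Prop :=
  ∃ χ : V → Option (Fin k), IsCFColoring G χ

/-- The unit square graph on points `p`: distinct vertices are adjacent iff the
Chebyshev (ℓ∞) distance of their points is at most 2 (the axis-aligned squares
of side length 2 centered at the points intersect). -/
def unitSquareGraph {V : Type*} (p : V → ℝ × ℝ) : SimpleGraph V where
  Adj u v := u ≠ v ∧ max |(p u).1 - (p v).1| |(p u).2 - (p v).2| ≤ 2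
  symm := by
    constructor
    intro u v ⟨h1, h2⟩
    exact ⟨h1.symm, by rwa [abs_sub_comm ((p v).1), abs_sub_comm ((p v).2)]⟩
  loopless := by
    constructor
    intro v ⟨h1, _⟩
    exact h1 rfl

noncomputable section CFaux

/-- Index of the grid cell (side 2) containing a point. -/
def cellIdx (q : ℝ × ℝ) : ℤ × ℤ := (⌊q.1 / 2⌋, ⌊q.2 / 2⌋)

/-- Color of a cell by the parities of its indices. -/
def colorOf (c : ℤ × ℤ) : Fin 4 :=
  if Even c.1 then (if Even c.2 then 0 else 1) else (if Even c.2 then 2 else 3)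

lemma colorOf_eq_iff {c c' : ℤ × ℤ} (h : colorOf c = colorOf c') :
    (Even c.1 ↔ Even c'.1) ∧ (Even c.2 ↔ Even c'.2) := by
  unfold colorOf at h
  split_ifs at h <;> first
    | (exact absurd h (by decide))
    | (constructor <;> constructor <;> intro <;> tauto)

lemma same_cell_close {x x' : ℝ} (h : ⌊x / 2⌋ = ⌊x' / 2⌋) : |x - x'| ≤ 2 := by
  have h1 : (⌊x / 2⌋ : ℝ) ≤ x / 2 := Int.floor_le _
  have h2 : x / 2 < ⌊x / 2⌋ + 1 := Int.lt_floor_add_one _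
  have h3 : (⌊x' / 2⌋ : ℝ) ≤ x' / 2 := Int.floor_le _
  have h4 : x' / 2 < ⌊x' / 2⌋ + 1 := Int.lt_floor_add_one _
  rw [h] at h1 h2
  rw [abs_le]; constructor <;> linarith

lemma far_of_ne_same_parity {x x' : ℝ} (hne : ⌊x / 2⌋ ≠ ⌊x' / 2⌋)
    (hpar : Even ⌊x / 2⌋ ↔ Even ⌊x' / 2⌋) : 2 < |x - x'| := by
  set i := ⌊x / 2⌋ with hi
  set i' := ⌊x' / 2⌋ with hi'
  have h1 : (i : ℝ) ≤ x / 2 := Int.floor_le _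
  have h2 : x / 2 < i + 1 := Int.lt_floor_add_one _
  have h3 : (i' : ℝ) ≤ x' / 2 := Int.floor_le _
  have h4 : x' / 2 < i' + 1 := Int.lt_floor_add_one _
  have hgap : i + 2 ≤ i' ∨ i' + 2 ≤ i := by
    rw [Int.even_iff, Int.even_iff] at hpar
    omega
  rcases hgap with hg | hg
  · have : (i : ℝ) + 2 ≤ (i' : ℝ) := by exact_mod_cast hg
    have hlt : 2 < x' - x := by linarith
    calc (2:ℝ) < x' - x := hlt
      _ ≤ |x - x'| := by rw [abs_sub_comm]; exact le_abs_self _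
  · have : (i' : ℝ) + 2 ≤ (i : ℝ) := by exact_mod_cast hg
    have hlt : 2 < x - x' := by linarith
    exact lt_of_lt_of_le hlt (le_abs_self _)

variable {V : Type*}

attribute [local instance] Classical.propDecidable

/-- Representative of a cell: some vertex in it, if any. -/
def repOf (p : V → ℝ × ℝ) (c : ℤ × ℤ) : Option V :=
  if h : ∃ u, cellIdx (p u) = c then some h.choose else none

end CFaux

theorem stmt11 {V : Type*} [Fintype V] (p : V → ℝ × ℝ) :
    HasCFColoring (unitSquareGraph p) 4 := by
  classical
  refine ⟨fun v => if repOf p (cellIdx (p v)) = some v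
      then some (colorOf (cellIdx (p v))) else none, ?_⟩
  intro v
  have hex : ∃ u, cellIdx (p u) = cellIdx (p v) := ⟨v, rfl⟩
  set u := hex.choose with hu_def
  have hu : cellIdx (p u) = cellIdx (p v) := hex.choose_spec
  have hrep : repOf p (cellIdx (p v)) = some u := by
    rw [repOf, dif_pos hex]
  have hχu : (if repOf p (cellIdx (p u)) = some u
      then some (colorOf (cellIdx (p u))) else none) = some (colorOf (cellIdx (p v))) := by
    rw [hu, if_pos hrep]
  have hcell1 : ⌊(p u).1 / 2⌋ = ⌊(p v).1 / 2⌋ := congrArg Prod.fst hu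
  have hcell2 : ⌊(p u).2 / 2⌋ = ⌊(p v).2 / 2⌋ := congrArg Prod.snd hu
  refine ⟨u, ?_, ?_, ?_⟩
  · rcases eq_or_ne u v with h | h
    · exact h ▸ Set.mem_insert _ _
    · refine Set.mem_insert_iff.mpr (Or.inr ?_)
      rw [SimpleGraph.mem_neighborSet]
      refine ⟨h.symm, ?_⟩
      have e1 : |(p v).1 - (p u).1| ≤ 2 := same_cell_close hcell1.symm
      have e2 : |(p v).2 - (p u).2| ≤ 2 := same_cell_close hcell2.symm
      exact max_le e1 e2
  · simp [hχu]
  · intro w hw hχw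
    dsimp only at hχw
    rw [hχu] at hχw
    have hcol : colorOf (cellIdx (p w)) = colorOf (cellIdx (p v)) ∧
        repOf p (cellIdx (p w)) = some w := by
      by_cases hc : repOf p (cellIdx (p w)) = some w
      · rw [if_pos hc] at hχw
        exact ⟨Option.some_injective _ hχw, hc⟩
      · rw [if_neg hc] at hχw; exact absurd hχw (by simp)
    by_cases hceq : cellIdx (p w) = cellIdx (p v)
    · have : repOf p (cellIdx (p v)) = some w := hceq ▸ hcol.2
      have := this.symm.trans hrep
      exact Option.some_injective _ this
    · exfalso
      have hpar := colorOf_eq_iff hcol.1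
      -- w is in N[v], so Chebyshev distance ≤ 2 (or w = v)
      have hdist : max |(p w).1 - (p v).1| |(p w).2 - (p v).2| ≤ 2 := by
        rcases Set.mem_insert_iff.mp hw with h | h
        · subst h; simp
        · rw [SimpleGraph.mem_neighborSet] at h
          exact h.symm.2
      have hd1 : |(p w).1 - (p v).1| ≤ 2 := le_trans (le_max_left _ _) hdist
      have hd2 : |(p w).2 - (p v).2| ≤ 2 := le_trans (le_max_right _ _) hdist
      have hne : ⌊(p w).1 / 2⌋ ≠ ⌊(p v).1 / 2⌋ ∨ ⌊(p w).2 / 2⌋ ≠ ⌊(p v).2 / 2⌋ := by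
        by_contra hcon
        push_neg at hcon
        exact hceq (Prod.ext hcon.1 hcon.2)
      rcases hne with hne | hne
      · exact absurd hd1 (not_le.mpr (far_of_ne_same_parity hne hpar.1))
      · exact absurd hd2 (not_le.mpr (far_of_ne_same_parity hne hpar.2))
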